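/- Every torsion element of a free product *_{i∈I} A_i of a family of groups is conjugate to an element of one of the factors A_i. -/

import Mathlib

open Monoid

namespace TorsionAux

variable {ι : Type*} {A : ι → Type*} [∀ i, Group (A i)]

theorem neword_prod_ne_one {i j : ι} (w : CoprodI.NeWord A i j) : w.prod ≠ 1 := by
  classical
  intro h
  have h1 : w.toWord = CoprodI.Word.empty := by
    have : (CoprodI.Word.equiv (M := A)).symm w.toWord =
        (CoprodI.Word.equiv (M := A)).symm CoprodI.Word.empty := by
      show w.toWord.prod = CoprodI.Word.empty.prod
      simpa [CoprodI.NeWord.prod] using h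
    exact (CoprodI.Word.equiv (M := A)).symm.injective this
  exact w.toList_ne_nil (by rw [show w.toList = w.toWord.toList from rfl, h1]; rfl)

theorem exists_neword_pow {i j : ι} (hij : i ≠ j) (w : CoprodI.NeWord A i j) :
    ∀ n : ℕ, ∃ w' : CoprodI.NeWord A i j, w'.prod = w.prod ^ (n + 1) := by
  intro n
  induction n with
  | zero => exact ⟨w, by simp⟩
  | succ n ih =>
    obtain ⟨w', hw'⟩ := ih
    exact ⟨CoprodI.NeWord.append w' hij.symm w, by
      rw [CoprodI.NeWord.append_prod, hw', ← pow_succ]⟩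

theorem key [Nonempty ι] : ∀ (n : ℕ) (w : CoprodI.Word A), w.toList.length ≤ n →
    IsOfFinOrder w.prod →
    ∃ (i : ι) (a : A i) (x : CoprodI A), w.prod = x * CoprodI.of a * x⁻¹ := by
  intro n
  induction n with
  | zero =>
    intro w hlen _
    have hw : w = CoprodI.Word.empty :=
      CoprodI.Word.ext (List.length_eq_zero_iff.mp (Nat.le_zero.mp hlen))
    exact ⟨Classical.arbitrary ι, 1, 1, by simp [hw]⟩
  | succ n ih =>
    intro w hlen hg
    rcases hl : w.toList with _ | ⟨⟨i, a⟩, t⟩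
    · have hw : w = CoprodI.Word.empty := CoprodI.Word.ext hl
      exact ⟨Classical.arbitrary ι, 1, 1, by simp [hw]⟩
    rcases ht : t with _ | ⟨z, t'⟩
    · refine ⟨i, a, 1, by simp [CoprodI.Word.prod, hl, ht]⟩
    have htne : t ≠ [] := by rw [ht]; simp
    rcases hgl : t.getLast htne with ⟨j, b⟩
    by_cases hij : j = i
    · -- first and last letters in the same factor: conjugate by the first letter
      subst hij
      set m := t.dropLast with hm
      have hsplit : m ++ [(⟨j, b⟩ : Σ i, A i)] = t := by
        rw [← hgl]; exact List.dropLast_append_getLast htne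
      have hlform : w.toList = ⟨j, a⟩ :: (m ++ [⟨j, b⟩]) := by rw [hl, hsplit]
      -- chain and ne_one facts
      have hchain := w.chain_ne
      rw [hlform] at hchain
      have hchain2 := hchain.tail
      simp only [List.tail_cons] at hchain2
      obtain ⟨hcm, -, hlast⟩ := List.isChain_append.mp hchain2
      have hne1 := w.ne_one
      rw [hlform] at hne1
      -- product formula
      have hprodw : w.prod =
          CoprodI.of a * ((m.map fun z => CoprodI.of z.snd).prod * CoprodI.of b) := by
        rw [CoprodI.Word.prod, hlform]
        simp [List.prod_append, mul_assoc]
      -- construct the shorter word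
      have hmne : ∀ l ∈ m, Sigma.snd l ≠ 1 := fun l hlm => hne1 l (by simp [hlm])
      have hmlast : ∀ x ∈ m.getLast?, Sigma.fst x ≠ j := by
        intro x hx
        have := hlast x hx ⟨j, b⟩ (by simp)
        simpa using this
      have hconj : ∀ w₂ : CoprodI.Word A,
          w₂.prod = (CoprodI.of a)⁻¹ * w.prod * CoprodI.of a →
          w₂.toList.length ≤ n →
          ∃ (i : ι) (a : A i) (x : CoprodI A), w.prod = x * CoprodI.of a * x⁻¹ := by
        intro w₂ hp hlen₂
        have hfin : IsOfFinOrder w₂.prod := by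
          rw [hp]
          have : (CoprodI.of a)⁻¹ * w.prod * CoprodI.of a
              = (MulAut.conj ((CoprodI.of a)⁻¹)).toMonoidHom w.prod := by
            simp [MulAut.conj_apply]
          rw [this]
          exact (MulAut.conj ((CoprodI.of a)⁻¹)).toMonoidHom.isOfFinOrder hg
        obtain ⟨i', a', x, hx⟩ := ih w₂ hlen₂ hfin
        refine ⟨i', a', CoprodI.of a * x, ?_⟩
        have : w.prod = CoprodI.of a * w₂.prod * (CoprodI.of a)⁻¹ := by
          rw [hp]; group
        rw [this, hx]
        group
      have hlenm : m.length + 1 = t.length := by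
        rw [← hsplit]; simp
      have htlen : t.length ≤ n := by
        have : w.toList.length = t.length + 1 := by rw [hl]; simp
        omega
      by_cases hba : b * a = 1
      · refine hconj ⟨m, hmne, hcm⟩ ?_ (by simpa using by omega)
        show (m.map fun z => CoprodI.of z.snd).prod = _
        rw [hprodw]
        have : CoprodI.of b * CoprodI.of a = (1 : CoprodI A) := by
          rw [← MonoidHom.map_mul, hba, MonoidHom.map_one]
        calc (m.map fun z => CoprodI.of z.snd).prod
            = (m.map fun z => CoprodI.of z.snd).prod * (CoprodI.of b * CoprodI.of a) := by
              rw [this, mul_one]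
          _ = _ := by group
      · have hW : ∀ l ∈ m ++ [(⟨j, b * a⟩ : Σ i, A i)], Sigma.snd l ≠ 1 := by
          intro l hlm
          rcases List.mem_append.mp hlm with h | h
          · exact hmne l h
          · simp only [List.mem_singleton] at h
            subst h; exact hba
        have hC : (m ++ [(⟨j, b * a⟩ : Σ i, A i)]).IsChain
            fun l l' => Sigma.fst l ≠ Sigma.fst l' := by
          refine List.isChain_append.mpr ⟨hcm, List.isChain_singleton _, ?_⟩
          intro x hx y hy
          simp only [List.head?_cons, Option.mem_some_iff] at hy
          subst hy
          exact hmlast x hx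
        refine hconj (CoprodI.Word.mk (m ++ [⟨j, b * a⟩]) hW hC) ?_ ?_
        · show ((m ++ [(⟨j, b * a⟩ : Σ i, A i)]).map fun z => CoprodI.of z.snd).prod = (CoprodI.of a)⁻¹ * w.prod * CoprodI.of a
          rw [hprodw]
          simp [List.prod_append, MonoidHom.map_mul, mul_assoc]
        · simp only [CoprodI.Word.toList, List.length_append, List.length_singleton]
          omega
    · -- first and last letters in different factors: infinite order, contradiction
      exfalso
      have hwne : w ≠ CoprodI.Word.empty := by
        intro h; rw [h] at hl; exact (List.cons_ne_nil _ _) hl.symm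
      obtain ⟨i', j', nw, hnw⟩ := CoprodI.NeWord.of_word w hwne
      have hlist : nw.toList = w.toList := by rw [← hnw]; rfl
      have hi' : i' = i := by
        have h1 := nw.toList_head?
        rw [hlist, hl] at h1
        simp only [List.head?_cons, Option.some_inj] at h1
        exact (congrArg Sigma.fst h1).symm
      have hj' : j' = j := by
        have h1 := nw.toList_getLast?
        rw [hlist, hl] at h1
        have h2 : (⟨i, a⟩ :: t : List (Σ i, A i)).getLast? = some (t.getLast htne) := by
          rw [List.getLast?_eq_getLast (List.cons_ne_nil _ _), List.getLast_cons htne]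
        rw [h2, hgl] at h1
        simp only [Option.some_inj] at h1
        exact (congrArg Sigma.fst h1).symm
      have hij' : i' ≠ j' := by rw [hi', hj']; exact fun h => hij h.symm
      obtain ⟨k, hk, hk1⟩ := hg.exists_pow_eq_one
      obtain ⟨nw2, hnw2⟩ := exists_neword_pow hij' nw (k - 1)
      have hnwprod : nw.prod = w.prod := by rw [CoprodI.NeWord.prod, hnw]
      apply neword_prod_ne_one nw2
      rw [hnw2, hnwprod, Nat.sub_add_cancel hk, hk1]

end TorsionAux

/-- Every torsion element of a free product `*_{i∈I} A_i` of a (nonempty) family of groups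
is conjugate to an element of one of the factors. -/
theorem torsion_conjugate_into_factor
    {ι : Type*} [Nonempty ι] (A : ι → Type*) [∀ i, Group (A i)]
    (g : CoprodI A) (hg : IsOfFinOrder g) :
    ∃ (i : ι) (a : A i) (x : CoprodI A), g = x * CoprodI.of a * x⁻¹ := by
  classical
  have hprod : (CoprodI.Word.equiv g).prod = g :=
    (CoprodI.Word.equiv (M := A)).symm_apply_apply g
  obtain ⟨i, a, x, hx⟩ := TorsionAux.key (A := A) (CoprodI.Word.equiv g).toList.length
    (CoprodI.Word.equiv g) le_rfl (by rw [hprod]; exact hg)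
  exact ⟨i, a, x, by rw [← hprod, hx]⟩
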